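/- Let d ≥ 2 be an integer and let a ∈ ℂ satisfy a^{d−1} = −1. Consider the holomorphic correspondence defined by (w − a)² = z^{2d}, i.e., z ↦ {z^d + a, −z^d + a}. Then a forward orbit (z_n)_{n≥0} of this correspondence with z₀ = 0 is bounded if and only if z_n = 0 for all even n and z_n = a for all odd n; in other words, the only bounded forward orbit of 0 is the 2-cycle 0 ↦ a ↦ 0, so a is a simple center of this family. -/

import Mathlib

/-- For `d ≥ 2` and `a` with `a^{d−1} = −1`, a forward orbit of the
correspondence `(w − a)² = z^{2d}`, i.e. `z ↦ {z^d + a, −z^d + a}`, starting at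
`0` is bounded iff it is the 2-cycle `0 ↦ a ↦ 0`: the parameter `a` is a simple
center of the family `(w − c)² = z^{2d}`. -/
theorem simple_center (d : ℕ) (hd : 2 ≤ d) (a : ℂ) (ha : a ^ (d - 1) = -1)
    (z : ℕ → ℂ) (h0 : z 0 = 0)
    (horb : ∀ n : ℕ, z (n + 1) = (z n) ^ d + a ∨ z (n + 1) = -(z n) ^ d + a) :
    Bornology.IsBounded (Set.range z) ↔
      ∀ n : ℕ, (Even n → z n = 0) ∧ (Odd n → z n = a) := by
  have hd0 : d ≠ 0 := by omega
  have habs : ‖a‖ = 1 := by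
    have h1 : ‖a‖ ^ (d - 1) = 1 := by
      rw [← norm_pow, ha]; simp
    rcases lt_trichotomy (‖a‖) 1 with h | h | h
    · have := pow_lt_one₀ (norm_nonneg a) h (show d - 1 ≠ 0 by omega)
      rw [h1] at this; linarith
    · exact h
    · have := one_lt_pow₀ h (show d - 1 ≠ 0 by omega)
      rw [h1] at this; linarith
  have had : a ^ d = -a := by
    have h2 : a ^ d = a ^ (d - 1) * a := by
      rw [← pow_succ]; congr 1; omega
    rw [h2, ha]; ring
  have grow : ∀ m, 2 ≤ ‖z m‖ →
      ∀ k : ℕ, 2 + (k : ℝ) ≤ ‖z (m + k)‖ := by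
    intro m hm k
    induction k with
    | zero => simpa using hm
    | succ k ih =>
      have hk0 : (0:ℝ) ≤ (k:ℝ) := Nat.cast_nonneg k
      have h2 : 2 ≤ ‖z (m + k)‖ := by linarith
      have hpow : ‖z (m + k)‖ ^ 2 ≤ ‖z (m + k)‖ ^ d :=
        pow_le_pow_right₀ (by linarith) hd
      have key : ‖z (m + k)‖ ^ d - 1 ≤ ‖z (m + k + 1)‖ := by
        rcases horb (m + k) with h | h
        · have t := norm_add_le (z (m + k) ^ d + a) (-a)
          simp only [add_neg_cancel_right, norm_neg, norm_pow, habs] at t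
          rw [h]; linarith
        · have t := norm_add_le (-(z (m + k)) ^ d + a) (-a)
          have heq : -(z (m + k)) ^ d + a + -a = -((z (m + k)) ^ d) := by ring
          rw [heq] at t
          simp only [norm_neg, norm_pow, habs] at t
          rw [h]; linarith
      have hsq : ‖z (m + k)‖ ^ 2
          = ‖z (m + k)‖ * ‖z (m + k)‖ := sq _
      calc 2 + ((k+1:ℕ):ℝ) = 2 + ((k:ℝ)+1) := by push_cast; ring
        _ ≤ ‖z (m + k)‖ ^ d - 1 := by nlinarith
        _ ≤ ‖z (m + k + 1)‖ := key
  have unbdd : ∀ m, 2 ≤ ‖z m‖ → ¬ Bornology.IsBounded (Set.range z) := by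
    intro m hm hb
    obtain ⟨C, hC⟩ := (isBounded_iff_forall_norm_le).mp hb
    have h1 := grow m hm (Nat.ceil C + 1)
    have h2 := hC (z (m + (Nat.ceil C + 1))) (Set.mem_range_self _)
    have h3 : C ≤ (Nat.ceil C : ℝ) := Nat.le_ceil C
    push_cast at h1
    linarith
  constructor
  · intro hb n
    induction n with
    | zero =>
      refine ⟨fun _ => h0, fun hodd => ?_⟩
      simp [Nat.odd_iff] at hodd
    | succ n ih =>
      rcases Nat.even_or_odd n with he | ho
      · have hz : z n = 0 := ih.1 he
        have hz1 : z (n + 1) = a := by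
          rcases horb n with h | h <;> rw [h, hz, zero_pow hd0] <;> ring
        refine ⟨fun h2 => ?_, fun _ => hz1⟩
        rw [Nat.even_iff] at he h2; omega
      · rcases horb n with h | h
        · have hz1 : z (n + 1) = 0 := by rw [h, ih.2 ho, had]; ring
          refine ⟨fun _ => hz1, fun hodd => ?_⟩
          rw [Nat.odd_iff] at ho hodd; omega
        · exfalso
          have hz1 : z (n + 1) = 2 * a := by rw [h, ih.2 ho, had]; ring
          refine unbdd (n + 1) ?_ hb
          rw [hz1, norm_mul, habs]
          simp
  · intro h
    rw [isBounded_iff_forall_norm_le]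
    refine ⟨1, ?_⟩
    rintro x ⟨n, rfl⟩
    rcases Nat.even_or_odd n with he | ho
    · rw [(h n).1 he]; simp
    · rw [(h n).2 ho, habs]
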